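/- Suppose 𝔥 = 𝔠 (the distributivity number equals the continuum). Then there exists a sequence ⟨y_α⟩_{α<𝔠} of infinite subsets of ω such that for every I ⊆ 𝔠 of cardinality 𝔠 and every infinite x ⊆ ω, some y_α with α ∈ I splits x. (In the paper's notation: 𝔥 = 𝔠 implies 𝔰𝔰₂ ≤ 𝔠.) -/
import Mathlib


open Cardinal

/-- `s` splits `t`: both `t ∩ s` and `t \ s` are infinite. -/
def Splits (s t : Set ℕ) : Prop := (t ∩ s).Infinite ∧ (t \ s).Infinite

/-- Almost inclusion `s ⊆* t`. -/
def AlmostSub (s t : Set ℕ) : Prop := (s \ t).Finite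

/-- `D` is a dense open subset of `([ω]^ω, ⊆*)`. -/
def DenseOpenAI (D : Set (Set ℕ)) : Prop :=
  (∀ y ∈ D, y.Infinite) ∧
  (∀ x : Set ℕ, x.Infinite → ∃ y ∈ D, AlmostSub y x) ∧
  (∀ y ∈ D, ∀ z : Set ℕ, z.Infinite → AlmostSub z y → z ∈ D)

/-- The distributivity number `𝔥`: the least cardinality of a family of dense open
subsets of `([ω]^ω, ⊆*)` with empty intersection. -/
noncomputable def distributivityNumber : Cardinal.{0} :=
  sInf {c | ∃ (ι : Type) (D : ι → Set (Set ℕ)), c = #ι ∧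
    (∀ i, DenseOpenAI (D i)) ∧ (⋂ i, D i) = ∅}


/-- Least element of `z` greater than `n`. -/
noncomputable def nxt (z : Set ℕ) (n : ℕ) : ℕ := sInf {m | m ∈ z ∧ n < m}

theorem nxt_spec {z : Set ℕ} (hz : z.Infinite) (n : ℕ) : nxt z n ∈ z ∧ n < nxt z n := by
  have hne : {m | m ∈ z ∧ n < m}.Nonempty := by
    rcases (hz.exists_gt n) with ⟨m, hm, hmn⟩
    exact ⟨m, hm, hmn⟩
  exact Nat.sInf_mem hne

theorem nxt_le {z : Set ℕ} {m n : ℕ} (hm : m ∈ z) (hn : n < m) : nxt z n ≤ m :=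
  Nat.sInf_le ⟨hm, hn⟩

theorem nxt_mono {z : Set ℕ} (hz : z.Infinite) {n n' : ℕ} (h : n ≤ n') :
    nxt z n ≤ nxt z n' := by
  obtain ⟨h1, h2⟩ := nxt_spec hz n'
  exact nxt_le h1 (lt_of_le_of_lt h h2)

/-- The dense open set of `z` whose double-next function eventually dominates `f`. -/
def Dom (f : ℕ → ℕ) : Set (Set ℕ) :=
  {z | z.Infinite ∧ ∃ N, ∀ n ≥ N, f n ≤ nxt z (nxt z n)}

theorem nxt_range {a : ℕ → ℕ} (ha : StrictMono a) (k : ℕ) :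
    nxt (Set.range a) (a k) = a (k + 1) := by
  have hinf : (Set.range a).Infinite := Set.infinite_range_of_injective ha.injective
  refine le_antisymm (nxt_le ⟨k + 1, rfl⟩ (ha (Nat.lt_succ_self k))) ?_
  obtain ⟨hmem, hgt⟩ := nxt_spec hinf (a k)
  obtain ⟨j, hj⟩ := hmem
  rw [← hj] at hgt ⊢
  exact ha.le_iff_le.2 (Nat.succ_le_of_lt (ha.lt_iff_lt.1 hgt))

theorem denseOpen_Dom (f : ℕ → ℕ) : DenseOpenAI (Dom f) := by
  refine ⟨fun y hy => hy.1, ?_, ?_⟩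
  · -- density
    intro x hx
    set F : ℕ → ℕ := fun m => max m (Finset.sup (Finset.range (m + 1)) f) with hF
    have hFm : ∀ m, m ≤ F m := fun m => le_max_left _ _
    have hFf : ∀ n m, n ≤ m → f n ≤ F m := fun n m hnm =>
      le_trans (Finset.le_sup (Finset.mem_range.2 (Nat.lt_succ_of_le hnm))) (le_max_right _ _)
    set a : ℕ → ℕ := fun k => Nat.rec (nxt x 0) (fun _ ak => nxt x (F ak)) k with haDef
    have ha0 : a 0 = nxt x 0 := rfl
    have haS : ∀ k, a (k + 1) = nxt x (F (a k)) := fun k => rfl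
    have haMem : ∀ k, a k ∈ x := by
      intro k; cases k with
      | zero => exact (nxt_spec hx 0).1
      | succ k => rw [haS]; exact (nxt_spec hx _).1
    have haMono : StrictMono a := by
      apply strictMono_nat_of_lt_succ
      intro k
      rw [haS]
      exact lt_of_le_of_lt (hFm _) (nxt_spec hx _).2
    have hyinf : (Set.range a).Infinite := Set.infinite_range_of_injective haMono.injective
    refine ⟨Set.range a, ⟨hyinf, 0, ?_⟩, ?_⟩
    · intro n _
      obtain ⟨hmem, hgt⟩ := nxt_spec hyinf n
      obtain ⟨k, hk⟩ := hmem
      rw [← hk, nxt_range haMono, haS]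
      calc f n ≤ F (a k) := hFf n (a k) (le_of_lt (hk ▸ hgt))
        _ ≤ nxt x (F (a k)) := le_of_lt (nxt_spec hx _).2
    · have : Set.range a \ x = ∅ := by
        apply Set.eq_empty_iff_forall_notMem.2
        rintro m ⟨⟨k, hk⟩, hmx⟩
        exact hmx (hk ▸ haMem k)
      rw [AlmostSub, this]; exact Set.finite_empty
  · -- open
    rintro z ⟨hzinf, N, hN⟩ z' hz'inf hsub
    refine ⟨hz'inf, ?_⟩
    obtain ⟨M, hM⟩ := hsub.bddAbove
    refine ⟨max N (M + 1), fun n hn => ?_⟩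
    have hnN : N ≤ n := le_trans (le_max_left _ _) hn
    have hnM : M + 1 ≤ n := le_trans (le_max_right _ _) hn
    have hmemz : ∀ m ∈ z', n < m → m ∈ z := by
      intro m hm hnm
      by_contra hmz
      exact absurd (hM ⟨hm, hmz⟩) (Nat.not_le.2 (lt_of_lt_of_le (Nat.lt_of_succ_le hnM) (le_of_lt hnm)))
    obtain ⟨hp, hpn⟩ := nxt_spec hz'inf n
    obtain ⟨hq, hqp⟩ := nxt_spec hz'inf (nxt z' n)
    have hpz : nxt z' n ∈ z := hmemz _ hp hpn
    have hqz : nxt z' (nxt z' n) ∈ z := hmemz _ hq (lt_trans hpn hqp)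
    have h1 : nxt z n ≤ nxt z' n := nxt_le hpz hpn
    have h2 : nxt z (nxt z n) ≤ nxt z' (nxt z' n) :=
      nxt_le hqz (lt_of_le_of_lt h1 hqp)
    exact le_trans (hN n hnN) h2

theorem inter_nonempty_of_h (h : distributivityNumber = Cardinal.continuum)
    {ι : Type} (hlt : #ι < Cardinal.continuum) (D : ι → Set (Set ℕ))
    (hD : ∀ i, DenseOpenAI (D i)) : (⋂ i, D i).Nonempty := by
  rw [Set.nonempty_iff_ne_empty]
  intro he
  have hle : distributivityNumber ≤ #ι := csInf_le' ⟨ι, D, rfl, hD, he⟩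
  rw [h] at hle
  exact absurd hlt (not_lt.2 hle)

theorem reaping_of_h (h : distributivityNumber = Cardinal.continuum)
    {ι : Type} (hlt : #ι < Cardinal.continuum) (x : ι → Set ℕ)
    (hx : ∀ i, (x i).Infinite) : ∃ y : Set ℕ, ∀ i, Splits y (x i) := by
  rcases isEmpty_or_nonempty ι with hι | hι
  · exact ⟨∅, fun i => hι.elim i⟩
  obtain ⟨z, hz⟩ := inter_nonempty_of_h h hlt (fun i => Dom (nxt (x i)))
    (fun i => denseOpen_Dom _)
  have hzi : ∀ i, z ∈ Dom (nxt (x i)) := fun i => Set.mem_iInter.1 hz i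
  obtain ⟨i0⟩ := hι
  have hzinf : z.Infinite := (hzi i0).1
  set g : ℕ → ℕ := fun n => nxt z (nxt z n) with hg
  have hgn : ∀ n, n < g n := fun n => lt_trans (nxt_spec hzinf n).2 (nxt_spec hzinf _).2
  set a : ℕ → ℕ := fun k => Nat.rec 0 (fun _ ak => g ak) k with ha
  have haS : ∀ k, a (k + 1) = g (a k) := fun k => rfl
  have haMono : StrictMono a := strictMono_nat_of_lt_succ fun k => hgn (a k)
  have haLe : ∀ k, k ≤ a k := fun k => haMono.le_apply
  set Y : Set ℕ := {m | ∃ k, Even k ∧ a k < m ∧ m ≤ a (k + 1)} with hY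
  -- disjointness of intervals
  have hdisj : ∀ k k' m, a k < m → m ≤ a (k + 1) → a k' < m → m ≤ a (k' + 1) → k = k' := by
    intro k k' m h1 h2 h3 h4
    rcases lt_trichotomy k k' with hkk | hkk | hkk
    · exact absurd (lt_of_le_of_lt (le_trans h2 (haMono.le_iff_le.2 hkk)) h3) (lt_irrefl m)
    · exact hkk
    · exact absurd (lt_of_le_of_lt (le_trans h4 (haMono.le_iff_le.2 hkk)) h1) (lt_irrefl m)
  refine ⟨Y, fun i => ?_⟩
  obtain ⟨N, hN⟩ := (hzi i).2
  have hb : ∀ k, N ≤ a k → nxt (x i) (a k) ∈ x i ∧ a k < nxt (x i) (a k) ∧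
      nxt (x i) (a k) ≤ a (k + 1) := by
    intro k hk
    obtain ⟨hb1, hb2⟩ := nxt_spec (hx i) (a k)
    exact ⟨hb1, hb2, (haS k) ▸ hN (a k) hk⟩
  constructor
  · -- x i ∩ Y infinite
    apply Set.infinite_of_forall_exists_gt
    intro B
    set k := 2 * max N B with hk
    have hkN : N ≤ a k := le_trans (le_trans (le_max_left _ _) (Nat.le_mul_of_pos_left _ two_pos)) (haLe k)
    obtain ⟨hb1, hb2, hb3⟩ := hb k hkN
    refine ⟨nxt (x i) (a k), ⟨hb1, k, ⟨max N B, two_mul _⟩, hb2, hb3⟩, ?_⟩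
    have : B ≤ a k := le_trans (le_trans (le_max_right _ _) (Nat.le_mul_of_pos_left _ two_pos)) (haLe k)
    exact lt_of_le_of_lt this hb2
  · -- x i \ Y infinite
    apply Set.infinite_of_forall_exists_gt
    intro B
    set k := 2 * max N B + 1 with hk
    have hkN : N ≤ a k := le_trans (le_trans (le_max_left _ _) (le_trans (Nat.le_mul_of_pos_left _ two_pos) (Nat.le_succ _))) (haLe k)
    obtain ⟨hb1, hb2, hb3⟩ := hb k hkN
    refine ⟨nxt (x i) (a k), ⟨hb1, ?_⟩, ?_⟩
    · rintro ⟨k', hk'even, h3, h4⟩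
      have := hdisj k k' _ hb2 hb3 h3 h4
      rw [← this] at hk'even
      rw [Nat.even_iff] at hk'even
      omega
    · have : B ≤ a k := le_trans (le_trans (le_max_right _ _) (le_trans (Nat.le_mul_of_pos_left _ two_pos) (Nat.le_succ _))) (haLe k)
      exact lt_of_le_of_lt this hb2

/-- If `𝔥 = 𝔠` then `𝔰𝔰₂ ≤ 𝔠`: there is a sequence `⟨y_α⟩_{α<𝔠}` of infinite
subsets of `ω` such that for every `I ⊆ 𝔠` of size `𝔠` and every infinite `x ⊆ ω`,
some `y_α` with `α ∈ I` splits `x`. -/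
theorem h_eq_continuum_implies_supersplitting
    (h : distributivityNumber = Cardinal.continuum) :
    ∃ (ι : Type) (y : ι → Set ℕ), #ι = Cardinal.continuum ∧
      (∀ i, (y i).Infinite) ∧
      ∀ I : Set ι, #I = Cardinal.continuum →
        ∀ x : Set ℕ, x.Infinite → ∃ i ∈ I, Splits (y i) x := by
  classical
  have hset : #(Set ℕ) = Cardinal.continuum := by
    rw [Cardinal.mk_set, Cardinal.mk_nat, Cardinal.two_power_aleph0]
  set ι := (Cardinal.continuum.ord).ToType with hιdef
  have hι : #ι = Cardinal.continuum := by
    rw [hιdef, Cardinal.mk_toType, Cardinal.card_ord]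
  obtain ⟨e⟩ : Nonempty (ι ≃ Set ℕ) := Cardinal.eq.1 (hι.trans hset.symm)
  set X : ι → Set ℕ := fun j => if (e j).Infinite then e j else Set.univ with hX
  have hXinf : ∀ j, (X j).Infinite := by
    intro j
    by_cases hj : (e j).Infinite
    · simp [hX, hj]
    · simp only [hX, hj, if_false]
      exact Set.infinite_univ
  have hIic : ∀ i : ι, #(Set.Iic i) < Cardinal.continuum := by
    intro i
    rw [← Set.Iio_insert]
    calc #(insert i (Set.Iio i) : Set ι) ≤ #(Set.Iio i) + 1 := Cardinal.mk_insert_le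
      _ < Cardinal.continuum :=
        Cardinal.add_lt_of_lt Cardinal.aleph0_lt_continuum.le
          (Cardinal.mk_Iio_ord_toType i) (lt_of_lt_of_le Cardinal.one_lt_aleph0
            Cardinal.aleph0_lt_continuum.le)
  have hy : ∀ i : ι, ∃ y : Set ℕ, ∀ j : Set.Iic i, Splits y (X j.val) := by
    intro i
    exact reaping_of_h h (hIic i) (fun j : Set.Iic i => X j.val) (fun j => hXinf _)
  choose y hy using hy
  refine ⟨ι, y, hι, ?_, ?_⟩
  · intro i
    have := (hy i ⟨i, le_refl i⟩).1
    exact this.mono (Set.inter_subset_right)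
  · intro I hI x hx
    set j := e.symm x with hj
    have hXj : X j = x := by
      simp only [hX, hj, Equiv.apply_symm_apply]
      rw [if_pos hx]
    by_contra hcon
    push_neg at hcon
    have hsub : I ⊆ Set.Iio j := by
      intro i hi
      rcases lt_or_ge i j with hij | hij
      · exact hij
      · exact absurd (hXj ▸ hy i ⟨j, hij⟩) (hcon i hi)
    have := lt_of_le_of_lt (Cardinal.mk_le_mk_of_subset hsub) (Cardinal.mk_Iio_ord_toType j)
    rw [hI] at this
    exact lt_irrefl _ this
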